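/- arXiv:1002.1227 — 6 statements merged into one kernel-verified Lean document; each statement's English description precedes it below -/
import Mathlib

section
/- For every finite connected simple graph G = (V,E) and every spin configuration σ on G, there exists a finite family B₁, …, B_N of pairwise disjoint borders of G whose union is exactly the disagreement edge set D(σ). -/
open scoped BigOperators Classical

namespace PG

variable {V : Type*}

/-- The product of the spins at the two endpoints of an unordered pair. -/
def spinProd (σ : V → ℤ) : Sym2 V → ℤ :=
  Sym2.lift ⟨fun i j => σ i * σ j, fun i j => mul_comm (σ i) (σ j)⟩

/-- The spins at the two endpoints of an unordered pair disagree. -/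
def Disagrees (σ : V → ℤ) : Sym2 V → Prop :=
  Sym2.lift ⟨fun i j => σ i ≠ σ j, fun i j => propext ne_comm⟩

/-- The disagreement edge set D(σ) of a spin configuration. -/
def disagreeSet (G : SimpleGraph V) (σ : V → ℤ) : Set (Sym2 V) :=
  {e | e ∈ G.edgeSet ∧ Disagrees σ e}

/-- A spin configuration takes values ±1. -/
def IsSpin (σ : V → ℤ) : Prop := ∀ v, σ v = 1 ∨ σ v = -1

/-- `B` is a border of `G` with sides `P₁`, `P₂`. -/
structure IsBorderWith (G : SimpleGraph V) (B : Set (Sym2 V)) (P₁ P₂ : Set V) : Prop where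
  disj : Disjoint P₁ P₂
  cover : P₁ ∪ P₂ = Set.univ
  ne₁ : P₁.Nonempty
  ne₂ : P₂.Nonempty
  conn₁ : (G.induce P₁).Connected
  conn₂ : (G.induce P₂).Connected
  eq_edges : B = {e | e ∈ G.edgeSet ∧ ∃ i ∈ P₁, ∃ j ∈ P₂, e = s(i, j)}

/-- `B` is a border of `G`. -/
def IsBorder (G : SimpleGraph V) (B : Set (Sym2 V)) : Prop :=
  ∃ P₁ P₂ : Set V, IsBorderWith G B P₁ P₂

/-- `p` is internal to the border `B`: it lies on the side with no more vertices. -/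
def InternalTo (G : SimpleGraph V) (p : V) (B : Set (Sym2 V)) : Prop :=
  ∃ P₁ P₂ : Set V, IsBorderWith G B P₁ P₂ ∧ p ∈ P₁ ∧ P₁.ncard ≤ P₂.ncard

/-- μ^p(b): the number of borders of cardinality `b` to which `p` is internal. -/
noncomputable def mu (G : SimpleGraph V) (p : V) (b : ℕ) : ℕ :=
  {B : Finset (Sym2 V) | B.card = b ∧ InternalTo G p ↑B}.ncard

/-- The vertex border of `B` on side `P`: endpoints of edges of `B` lying in `P`. -/
def vertexBorder (B : Set (Sym2 V)) (P : Set V) : Set V :=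
  {v | v ∈ P ∧ ∃ e ∈ B, v ∈ e}

/-- Encoding of spin configurations by boolean functions. -/
def toSpin (τ : V → Bool) : V → ℤ := fun v => if τ v then 1 else -1

/-- The zero-field Ising Hamiltonian. -/
noncomputable def hamiltonian [Fintype V] (G : SimpleGraph V) [Fintype G.edgeSet]
    (J : Sym2 V → ℝ) (σ : V → ℤ) : ℝ :=
  -∑ e ∈ G.edgeFinset, J e * (spinProd σ e : ℝ)

/-- The partition function Z at inverse temperature β. -/
noncomputable def partitionZ [Fintype V] [DecidableEq V] (G : SimpleGraph V)
    [Fintype G.edgeSet] (J : Sym2 V → ℝ) (β : ℝ) : ℝ :=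
  ∑ τ : V → Bool, Real.exp (-β * hamiltonian G J (toSpin τ))

/-- Gibbs expectation of an observable `f` at inverse temperature β. -/
noncomputable def gibbsExp [Fintype V] [DecidableEq V] (G : SimpleGraph V)
    [Fintype G.edgeSet] (J : Sym2 V → ℝ) (β : ℝ) (f : (V → ℤ) → ℝ) : ℝ :=
  (∑ τ : V → Bool, f (toSpin τ) * Real.exp (-β * hamiltonian G J (toSpin τ))) /
    partitionZ G J β

/-- Gibbs probability of an event `S` at inverse temperature β. -/
noncomputable def gibbsProb [Fintype V] [DecidableEq V] (G : SimpleGraph V)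
    [Fintype G.edgeSet] (J : Sym2 V → ℝ) (β : ℝ) (S : (V → ℤ) → Prop) : ℝ :=
  gibbsExp G J β (fun σ => if S σ then 1 else 0)

/-- The magnetization M(σ). -/
noncomputable def magn [Fintype V] (σ : V → ℤ) : ℝ :=
  (∑ i, (σ i : ℝ)) / (Fintype.card V : ℝ)

/-- The external vertex boundary of a set of vertices. -/
def extBoundary (G : SimpleGraph V) (A : Set V) : Set V :=
  {v | v ∉ A ∧ ∃ a ∈ A, G.Adj v a}

/-- A (C,d)-isoperimetric inequality. -/
def IsoIneq (G : SimpleGraph V) (C d : ℝ) : Prop :=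
  ∀ A : Set V, A.Finite → A.Nonempty → A ≠ Set.univ →
    (extBoundary G A).Infinite ∨
      C * (A.ncard : ℝ) ^ ((d - 1) / d) ≤ ((extBoundary G A).ncard : ℝ)

/-- `G` has growth exponent `df`: balls of radius `r ≥ 1` contain at most `r^df` vertices. -/
def HasGrowth (G : SimpleGraph V) (df : ℝ) : Prop :=
  ∀ p : V, ∀ r : ℕ, 1 ≤ r → (({q : V | G.dist p q ≤ r}).ncard : ℝ) ≤ (r : ℝ) ^ df

/-- ν_q(b): the number of vertex sets containing `q` arising as a vertex border of a
border of cardinality `b`. -/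
noncomputable def nu (G : SimpleGraph V) (q : V) (b : ℕ) : ℕ :=
  {S : Set V | q ∈ S ∧ ∃ (B : Finset (Sym2 V)) (P₁ P₂ : Set V),
    IsBorderWith G ↑B P₁ P₂ ∧ B.card = b ∧ S = vertexBorder ↑B P₂}.ncard

/-! ### Auxiliary machinery for stmt_1 -/

/-- The agreement graph: edges of `G` whose endpoints have equal spin. -/
def agreeGraph (G : SimpleGraph V) (σ : V → ℤ) : SimpleGraph V where
  Adj x y := G.Adj x y ∧ σ x = σ y
  symm := ⟨fun _ _ ⟨h, hs⟩ => ⟨h.symm, hs.symm⟩⟩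
  loopless := ⟨fun x ⟨h, _⟩ => G.loopless.irrefl x h⟩

/-- The restriction of `G` to a vertex set `s` (as a graph on `V`). -/
def resGraph (G : SimpleGraph V) (s : Set V) : SimpleGraph V where
  Adj x y := G.Adj x y ∧ x ∈ s ∧ y ∈ s
  symm := ⟨fun _ _ ⟨h, hx, hy⟩ => ⟨h.symm, hy, hx⟩⟩
  loopless := ⟨fun x ⟨h, _⟩ => G.loopless.irrefl x h⟩

lemma agreeGraph_le {G : SimpleGraph V} {σ : V → ℤ} {x y : V}
    (h : (agreeGraph G σ).Adj x y) : G.Adj x y := h.1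

lemma resGraph_le {G : SimpleGraph V} {s : Set V} {x y : V}
    (h : (resGraph G s).Adj x y) : G.Adj x y := h.1

/-- A walk in a subgraph `G'` of `G`, all of whose vertices lie in `s`
(expressed via reachability from the start), yields reachability in `G.induce s`. -/
lemma reach_induce {G' G : SimpleGraph V} (hle : ∀ x y, G'.Adj x y → G.Adj x y)
    {s : Set V} :
    ∀ {a b : V} (p : G'.Walk a b) (ha : a ∈ s) (hs : ∀ x, G'.Reachable a x → x ∈ s),
      (G.induce s).Reachable ⟨a, ha⟩ ⟨b, hs b ⟨p⟩⟩
  | _, _, SimpleGraph.Walk.nil, _, _ => SimpleGraph.Reachable.refl _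
  | a, b, SimpleGraph.Walk.cons h p, ha, hs => by
    have hc := hs _ h.reachable
    have step : (G.induce s).Adj ⟨a, ha⟩ ⟨_, hc⟩ := by
      simp only [SimpleGraph.comap_adj]
      exact hle _ _ h
    exact step.reachable.trans
      (reach_induce hle p hc (fun x hx => hs x (h.reachable.trans hx)))

lemma agree_spin {G : SimpleGraph V} {σ : V → ℤ} {x y : V}
    (h : (agreeGraph G σ).Reachable x y) : σ x = σ y := by
  obtain ⟨p⟩ := h
  induction p with
  | nil => rfl
  | cons h _ ih => exact h.2.trans ih

lemma reach_out {G' : SimpleGraph V} {x y : V} (h : G'.Reachable x y) :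
    x = y ∨ ∃ z, G'.Adj z y := by
  obtain ⟨p⟩ := h
  induction p with
  | nil => exact Or.inl rfl
  | cons h _ ih =>
    rcases ih with rfl | hz
    · exact Or.inr ⟨_, h⟩
    · exact Or.inr hz

/-- The agreement cluster of `u`. -/
def Aset (G : SimpleGraph V) (σ : V → ℤ) (u : V) : Set V :=
  {w | (agreeGraph G σ).Reachable u w}

/-- The component of `v` in the complement of the cluster of `u`. -/
def Kset (G : SimpleGraph V) (σ : V → ℤ) (u v : V) : Set V :=
  {w | (resGraph G (Aset G σ u)ᶜ).Reachable v w}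

/-- The candidate border attached to a disagreement edge `s(u,v)`. -/
def Bset (G : SimpleGraph V) (σ : V → ℤ) (u v : V) : Set (Sym2 V) :=
  {e | e ∈ G.edgeSet ∧ ∃ i ∈ Kset G σ u v, ∃ j ∈ (Kset G σ u v)ᶜ, e = s(i, j)}

section Pair

variable {G : SimpleGraph V} {σ : V → ℤ} {u v : V}
  (huv : G.Adj u v) (hne : σ u ≠ σ v)

include hne in
lemma v_not_A : v ∉ Aset G σ u := fun h => hne (agree_spin h)

lemma u_mem_A : u ∈ Aset G σ u := SimpleGraph.Reachable.refl _

include hne in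
lemma K_sub_compl : Kset G σ u v ⊆ (Aset G σ u)ᶜ := by
  intro x hx
  rcases reach_out hx with rfl | ⟨z, hz⟩
  · exact v_not_A hne
  · exact hz.2.2

lemma v_mem_K : v ∈ Kset G σ u v := SimpleGraph.Reachable.refl _

include hne in
lemma u_not_K : u ∉ Kset G σ u v := fun h => K_sub_compl hne h u_mem_A

include hne in
lemma K_closed {x y : V} (hx : x ∈ Kset G σ u v) (hxy : G.Adj x y)
    (hy : y ∉ Aset G σ u) : y ∈ Kset G σ u v :=
  hx.trans (SimpleGraph.Adj.reachable ⟨hxy, K_sub_compl hne hx, hy⟩)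

lemma A_closed {j i : V} (hj : j ∈ Aset G σ u) (hji : G.Adj j i)
    (hs : σ i = σ j) : i ∈ Aset G σ u :=
  hj.trans (SimpleGraph.Adj.reachable ⟨hji, hs.symm⟩)

include hne in
lemma edge_to_A {i j : V} (hi : i ∈ Kset G σ u v) (hij : G.Adj i j)
    (hj : j ∉ Kset G σ u v) : j ∈ Aset G σ u := by
  by_contra hjA
  exact hj (K_closed hne hi hij hjA)

include huv hne in
lemma isBorderWith_Bset (hG : G.Connected) :
    IsBorderWith G (Bset G σ u v) (Kset G σ u v) (Kset G σ u v)ᶜ := by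
  constructor
  · exact disjoint_compl_right
  · exact Set.union_compl_self _
  · exact ⟨v, v_mem_K⟩
  · exact ⟨u, u_not_K hne⟩
  · -- induce K connected
    rw [SimpleGraph.connected_iff_exists_forall_reachable]
    refine ⟨⟨v, v_mem_K⟩, ?_⟩
    rintro ⟨x, hx⟩
    obtain ⟨p⟩ := (hx : (resGraph G (Aset G σ u)ᶜ).Reachable v x)
    exact reach_induce (fun _ _ h => resGraph_le h) p v_mem_K (fun _ h => h)
  · -- induce Kᶜ connected
    have hu' : u ∈ (Kset G σ u v)ᶜ := u_not_K hne
    have toU : ∀ (a : V), a ∈ Aset G σ u → ∀ (ha : a ∈ (Kset G σ u v)ᶜ),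
        (G.induce (Kset G σ u v)ᶜ).Reachable ⟨a, ha⟩ ⟨u, hu'⟩ := by
      intro a haA ha
      obtain ⟨pw⟩ := (haA : (agreeGraph G σ).Reachable u a).symm
      have hs : ∀ x, (agreeGraph G σ).Reachable a x → x ∈ (Kset G σ u v)ᶜ := by
        intro x hx hK
        exact K_sub_compl hne hK ((haA : (agreeGraph G σ).Reachable u a).trans hx)
      exact reach_induce (fun _ _ h => agreeGraph_le h) pw ha hs
    have key : ∀ {a b : V} (p : G.Walk a b), b ∈ Aset G σ u →
        ∀ (ha : a ∈ (Kset G σ u v)ᶜ),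
        (G.induce (Kset G σ u v)ᶜ).Reachable ⟨a, ha⟩ ⟨u, hu'⟩ := by
      intro a b p
      induction p with
      | nil => intro hbA ha; exact toU _ hbA ha
      | @cons a c b h q ih =>
        intro hbA ha
        by_cases haA : a ∈ Aset G σ u
        · exact toU _ haA ha
        · have hc : c ∈ (Kset G σ u v)ᶜ := fun hc => haA (edge_to_A hne hc h.symm ha)
          have step : (G.induce (Kset G σ u v)ᶜ).Adj ⟨a, ha⟩ ⟨c, hc⟩ := by
            simp only [SimpleGraph.comap_adj]
            exact h
          exact step.reachable.trans (ih hbA hc)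
    rw [SimpleGraph.connected_iff_exists_forall_reachable]
    refine ⟨⟨u, hu'⟩, ?_⟩
    rintro ⟨x, hx⟩
    exact (key ((hG x u).some) u_mem_A hx).symm
  · rfl

include hne in
lemma mem_Bset_elim {e : Sym2 V} (he : e ∈ Bset G σ u v) :
    ∃ i j, G.Adj i j ∧ i ∈ Kset G σ u v ∧ j ∈ Aset G σ u ∧ e = s(i, j) := by
  obtain ⟨heE, i, hi, j, hj, rfl⟩ := he
  have hadj : G.Adj i j := G.mem_edgeSet.mp heE
  exact ⟨i, j, hadj, hi, edge_to_A hne hi hadj hj, rfl⟩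

include hne in
lemma spin_ne_of_K_A {i j : V} (hi : i ∈ Kset G σ u v) (hj : j ∈ Aset G σ u)
    (hadj : G.Adj i j) : σ i ≠ σ j := by
  intro hs
  exact K_sub_compl hne hi (A_closed hj hadj.symm hs)

include hne in
lemma Bset_subset_disagree : Bset G σ u v ⊆ disagreeSet G σ := by
  intro e he
  obtain ⟨i, j, hadj, hi, hj, rfl⟩ := mem_Bset_elim hne he
  refine ⟨G.mem_edgeSet.mpr hadj, ?_⟩
  show Sym2.lift _ s(i, j)
  rw [Sym2.lift_mk]
  exact spin_ne_of_K_A hne hi hj hadj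

include huv hne in
lemma self_mem_Bset : s(u, v) ∈ Bset G σ u v :=
  ⟨G.mem_edgeSet.mpr huv, v, v_mem_K, u, u_not_K hne, Sym2.eq_swap⟩

end Pair

lemma Aset_eq_of {G : SimpleGraph V} {σ : V → ℤ} {u u' j : V}
    (h : (agreeGraph G σ).Reachable u j) (h' : (agreeGraph G σ).Reachable u' j) :
    Aset G σ u = Aset G σ u' := by
  ext w
  exact ⟨fun hw => (h'.trans h.symm).trans hw, fun hw => (h.trans h'.symm).trans hw⟩

/-- Coherence: two of the candidate borders that intersect are equal. -/
lemma Bset_coherent {G : SimpleGraph V} {σ : V → ℤ} {u v u' v' : V}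
    (hu1 : σ u = 1) (hv1 : σ v = -1) (hu1' : σ u' = 1) (hv1' : σ v' = -1)
    (hσ : IsSpin σ) {e : Sym2 V}
    (he : e ∈ Bset G σ u v) (he' : e ∈ Bset G σ u' v') :
    Bset G σ u v = Bset G σ u' v' := by
  have hne : σ u ≠ σ v := by rw [hu1, hv1]; decide
  have hne' : σ u' ≠ σ v' := by rw [hu1', hv1']; decide
  obtain ⟨i, j, hadj, hi, hj, rfl⟩ := mem_Bset_elim hne he
  obtain ⟨i', j', hadj', hi', hj', heq⟩ := mem_Bset_elim hne' he'
  have hσj : σ j = 1 := (agree_spin hj).symm.trans hu1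
  have hσj' : σ j' = 1 := (agree_spin hj').symm.trans hu1'
  have hσi : σ i = -1 := by
    rcases hσ i with h1 | h1
    · exact absurd (h1.trans hσj.symm) (spin_ne_of_K_A hne hi hj hadj)
    · exact h1
  have hij : i = i' ∧ j = j' := by
    rcases Sym2.eq_iff.mp heq with ⟨rfl, rfl⟩ | ⟨h1, h2⟩
    · exact ⟨rfl, rfl⟩
    · exfalso; rw [h1] at hσi; rw [hσj'] at hσi; exact absurd hσi (by decide)
  obtain ⟨rfl, rfl⟩ := hij
  have hA : Aset G σ u = Aset G σ u' := Aset_eq_of hj hj'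
  have hK : Kset G σ u v = Kset G σ u' v' := by
    have hGr : resGraph G (Aset G σ u)ᶜ = resGraph G (Aset G σ u')ᶜ := by rw [hA]
    have hi2 : (resGraph G (Aset G σ u)ᶜ).Reachable v' i := by rw [hGr]; exact hi'
    ext w
    constructor
    · intro hw
      show (resGraph G (Aset G σ u')ᶜ).Reachable v' w
      rw [← hGr]
      exact (hi2.trans hi.symm).trans hw
    · intro hw
      have hw2 : (resGraph G (Aset G σ u)ᶜ).Reachable v' w := by rw [hGr]; exact hw
      exact (hi.trans hi2.symm).trans hw2
  unfold Bset
  rw [hK]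

/-- Coverage: every disagreement edge lies in one of the candidate borders. -/
lemma disagree_covered {G : SimpleGraph V} {σ : V → ℤ} (hσ : IsSpin σ) {e : Sym2 V}
    (he : e ∈ disagreeSet G σ) :
    ∃ u v, G.Adj u v ∧ σ u = 1 ∧ σ v = -1 ∧ e ∈ Bset G σ u v := by
  obtain ⟨heE, hD⟩ := he
  induction e using Sym2.ind with
  | _ a b =>
    have hadj : G.Adj a b := G.mem_edgeSet.mp heE
    have hab : σ a ≠ σ b := by
      have : Sym2.lift _ s(a, b) := hD
      rwa [Sym2.lift_mk] at this
    rcases hσ a with ha | ha <;> rcases hσ b with hb | hb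
    · exact absurd (ha.trans hb.symm) hab
    · have hne : σ a ≠ σ b := hab
      exact ⟨a, b, hadj, ha, hb, self_mem_Bset hadj hne⟩
    · refine ⟨b, a, hadj.symm, hb, ha, ?_⟩
      have h2 := self_mem_Bset hadj.symm (show σ b ≠ σ a from fun h => hab h.symm)
      rwa [Sym2.eq_swap]
    · exact absurd (ha.trans hb.symm) hab

/-- the disagreement edge set of any spin configuration is the union of a
finite family of pairwise disjoint borders. -/
theorem stmt_1 {V : Type*} [Fintype V] (G : SimpleGraph V) (hG : G.Connected)
    (σ : V → ℤ) (hσ : IsSpin σ) :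
    ∃ (N : ℕ) (Bf : Fin N → Set (Sym2 V)),
      (∀ i, IsBorder G (Bf i)) ∧
      (∀ i j, i ≠ j → Disjoint (Bf i) (Bf j)) ∧
      (⋃ i, Bf i) = disagreeSet G σ := by
  classical
  set 𝔅 : Set (Set (Sym2 V)) :=
    {B | ∃ u v, G.Adj u v ∧ σ u = 1 ∧ σ v = -1 ∧ B = Bset G σ u v} with h𝔅
  haveI : Fintype ↥𝔅 := Fintype.ofFinite _
  refine ⟨Fintype.card ↥𝔅, fun i => ((Fintype.equivFin ↥𝔅).symm i : Set (Sym2 V)),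
    ?_, ?_, ?_⟩
  · intro i
    show IsBorder G (((Fintype.equivFin ↥𝔅).symm i : ↥𝔅) : Set (Sym2 V))
    obtain ⟨u, v, huv, hu1, hv1, hB⟩ := ((Fintype.equivFin ↥𝔅).symm i).2
    have hne : σ u ≠ σ v := by rw [hu1, hv1]; decide
    rw [hB]
    exact ⟨_, _, isBorderWith_Bset huv hne hG⟩
  · intro i j hij
    rw [Set.disjoint_left]
    intro e hei hej
    obtain ⟨u, v, huv, hu1, hv1, hBi⟩ := ((Fintype.equivFin ↥𝔅).symm i).2
    obtain ⟨u', v', huv', hu1', hv1', hBj⟩ := ((Fintype.equivFin ↥𝔅).symm j).2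
    have hei' : e ∈ (((Fintype.equivFin ↥𝔅).symm i : ↥𝔅) : Set (Sym2 V)) := hei
    have hej' : e ∈ (((Fintype.equivFin ↥𝔅).symm j : ↥𝔅) : Set (Sym2 V)) := hej
    rw [hBi] at hei'
    rw [hBj] at hej'
    have hBB := Bset_coherent hu1 hv1 hu1' hv1' hσ hei' hej'
    apply hij
    have heq : (((Fintype.equivFin ↥𝔅).symm i : ↥𝔅) : Set (Sym2 V)) =
        (((Fintype.equivFin ↥𝔅).symm j : ↥𝔅) : Set (Sym2 V)) := by
      rw [hBi, hBj, hBB]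
    exact (Fintype.equivFin ↥𝔅).symm.injective (Subtype.ext heq)
  · apply Set.Subset.antisymm
    · intro e he
      simp only [Set.mem_iUnion] at he
      obtain ⟨i, hei⟩ := he
      obtain ⟨u, v, huv, hu1, hv1, hB⟩ := ((Fintype.equivFin ↥𝔅).symm i).2
      have hei' : e ∈ (((Fintype.equivFin ↥𝔅).symm i : ↥𝔅) : Set (Sym2 V)) := hei
      rw [hB] at hei'
      have hne : σ u ≠ σ v := by rw [hu1, hv1]; decide
      exact Bset_subset_disagree hne hei'
    · intro e he
      obtain ⟨u, v, huv, hu1, hv1, heB⟩ := disagree_covered hσ he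
      have hmem : Bset G σ u v ∈ 𝔅 := ⟨u, v, huv, hu1, hv1, rfl⟩
      simp only [Set.mem_iUnion]
      refine ⟨(Fintype.equivFin ↥𝔅) ⟨Bset G σ u v, hmem⟩, ?_⟩
      show e ∈ (((Fintype.equivFin ↥𝔅).symm ((Fintype.equivFin ↥𝔅)
        ⟨Bset G σ u v, hmem⟩) : ↥𝔅) : Set (Sym2 V))
      rw [Equiv.symm_apply_apply]
      exact heB

end PG
end

section
/- Let G = (V,E) be a finite connected simple graph, p ∈ V, and let B₁, …, B_N be pairwise disjoint borders of G. Define the spin configuration σ by σ(q) = +1 if the number of indices i ∈ {1,…,N} such that q and p lie in different sides of B_i is even, and σ(q) = −1 otherwise. Then the disagreement edge set of σ is exactly B₁ ∪ … ∪ B_N. -/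
open scoped BigOperators Classical

namespace PG

variable {V : Type*}

/-- given pairwise disjoint borders `B₁,…,B_N` and a base vertex `p`, the
configuration assigning `+1` to `q` iff `q` is separated from `p` by an even number of
the borders has disagreement edge set exactly `B₁ ∪ … ∪ B_N`. -/
theorem stmt_2 {V : Type*} [Fintype V] (G : SimpleGraph V) (hG : G.Connected)
    (p : V) (N : ℕ) (Bf : Fin N → Set (Sym2 V)) (P₁ P₂ : Fin N → Set V)
    (hB : ∀ i, IsBorderWith G (Bf i) (P₁ i) (P₂ i))
    (hdisj : ∀ i j, i ≠ j → Disjoint (Bf i) (Bf j))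
    (σ : V → ℤ)
    (hσ : ∀ q, σ q =
      if Even ({i : Fin N | ¬ (q ∈ P₁ i ↔ p ∈ P₁ i)}.ncard) then 1 else -1) :
    disagreeSet G σ = ⋃ i, Bf i := by
  classical
  have hfin : ∀ (P : Fin N → Prop), {i | P i}.ncard = (Finset.univ.filter P).card := by
    intro P
    rw [← Set.ncard_coe_finset]
    congr 1
    ext i; simp
  have hcard : ∀ q, σ q =
      if Even ((Finset.univ.filter (fun i => ¬ (q ∈ P₁ i ↔ p ∈ P₁ i))).card) then 1 else -1 := by
    intro q
    rw [hσ q, hfin]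
    congr!
  have hside : ∀ i q, q ∈ P₂ i ↔ q ∉ P₁ i := by
    intro i q
    constructor
    · intro h2 h1
      exact Set.disjoint_left.mp (hB i).disj h1 h2
    · intro h
      have hu : q ∈ P₁ i ∪ P₂ i := by rw [(hB i).cover]; trivial
      rcases hu with h1 | h2
      · exact absurd h1 h
      · exact h2
  ext e
  induction e using Sym2.ind with
  | _ u v =>
  by_cases hadj : G.Adj u v
  · have hmem : ∀ i, s(u,v) ∈ Bf i ↔ ¬ (u ∈ P₁ i ↔ v ∈ P₁ i) := by
      intro i
      rw [(hB i).eq_edges]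
      simp only [Set.mem_setOf_eq, SimpleGraph.mem_edgeSet]
      constructor
      · rintro ⟨-, a, ha, b, hb, hab⟩
        rw [Sym2.eq_iff] at hab
        rcases hab with ⟨rfl, rfl⟩ | ⟨rfl, rfl⟩
        · rw [hside] at hb; tauto
        · rw [hside] at hb; tauto
      · intro h
        refine ⟨hadj, ?_⟩
        by_cases hu : u ∈ P₁ i
        · exact ⟨u, hu, v, (hside i v).2 (fun hv => h ⟨fun _ => hv, fun _ => hu⟩), rfl⟩
        · have hv : v ∈ P₁ i := by tauto
          exact ⟨v, hv, u, (hside i u).2 hu, Sym2.eq_swap⟩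
    set S : Finset (Fin N) := Finset.univ.filter (fun i => ¬ (u ∈ P₁ i ↔ v ∈ P₁ i)) with hSdef
    have hmemS : ∀ i, i ∈ S ↔ ¬ (u ∈ P₁ i ↔ v ∈ P₁ i) := by
      intro i; simp [hSdef]
    set Fu : Finset (Fin N) := Finset.univ.filter (fun i => ¬ (u ∈ P₁ i ↔ p ∈ P₁ i)) with hFu
    set Fv : Finset (Fin N) := Finset.univ.filter (fun i => ¬ (v ∈ P₁ i ↔ p ∈ P₁ i)) with hFv
    simp only [disagreeSet, Set.mem_setOf_eq, Set.mem_iUnion, SimpleGraph.mem_edgeSet,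
      Disagrees, Sym2.lift_mk]
    rcases S.eq_empty_or_nonempty with hE | ⟨i₀, hi₀⟩
    · have hUV : Fu = Fv := by
        ext i
        have hiS : ¬ i ∈ S := by rw [hE]; exact Finset.notMem_empty i
        rw [hmemS] at hiS
        simp only [hFu, hFv, Finset.mem_filter, Finset.mem_univ, true_and]
        tauto
      have hσeq : σ u = σ v := by rw [hcard u, hcard v, ← hFu, ← hFv, hUV]
      constructor
      · rintro ⟨-, hne⟩; exact absurd hσeq hne
      · rintro ⟨i, hi⟩
        have hiS : i ∈ S := (hmemS i).2 ((hmem i).1 hi)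
        rw [hE] at hiS
        exact absurd hiS (Finset.notMem_empty i)
    · have huniq : ∀ i ∈ S, i = i₀ := by
        intro i hi
        by_contra hne
        exact Set.disjoint_left.mp (hdisj i i₀ hne) ((hmem i).2 ((hmemS i).1 hi))
          ((hmem i₀).2 ((hmemS i₀).1 hi₀))
      have hkey : ∀ i, i ≠ i₀ → (i ∈ Fu ↔ i ∈ Fv) := by
        intro i hne
        have hiS : ¬ i ∈ S := fun h => hne (huniq i h)
        rw [hmemS] at hiS
        simp only [hFu, hFv, Finset.mem_filter, Finset.mem_univ, true_and]
        tauto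
      have hkey0 : (i₀ ∈ Fu ↔ i₀ ∉ Fv) := by
        have h0 := (hmemS i₀).1 hi₀
        simp only [hFu, hFv, Finset.mem_filter, Finset.mem_univ, true_and]
        tauto
      have hpar : Even Fu.card ↔ ¬ Even Fv.card := by
        by_cases h0 : i₀ ∈ Fu
        · have hFvEq : Fv = Fu.erase i₀ := by
            ext i
            by_cases hi : i = i₀
            · subst hi; simp [Finset.mem_erase, hkey0.1 h0]
            · simp [Finset.mem_erase, hi, ← hkey i hi]
          have hpos : 1 ≤ Fu.card := Finset.card_pos.2 ⟨i₀, h0⟩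
          have : Fu.card = Fv.card + 1 := by
            rw [hFvEq, Finset.card_erase_of_mem h0]
            omega
          rw [this, Nat.even_add_one]
        · have hFvEq : Fv = insert i₀ Fu := by
            ext i
            by_cases hi : i = i₀
            · subst hi; simp [Finset.mem_insert, not_not.1 (fun h => h0 (hkey0.2 h))]
            · simp [Finset.mem_insert, hi, ← hkey i hi]
          rw [hFvEq, Finset.card_insert_of_notMem h0, Nat.even_add_one]
          tauto
      have hσne : σ u ≠ σ v := by
        rw [hcard u, hcard v, ← hFu, ← hFv]
        by_cases h : Even Fu.card
        · rw [if_pos h, if_neg (hpar.1 h)]; decide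
        · rw [if_neg h, if_pos (not_not.1 (fun h2 => h (hpar.2 h2)))]; decide
      constructor
      · rintro -; exact ⟨i₀, (hmem i₀).2 ((hmemS i₀).1 hi₀)⟩
      · rintro -; exact ⟨hadj, hσne⟩
  · constructor
    · rintro ⟨h, -⟩
      exact absurd (G.mem_edgeSet.mp h) hadj
    · intro h
      obtain ⟨i, hi⟩ := Set.mem_iUnion.mp h
      rw [(hB i).eq_edges] at hi
      exact absurd (G.mem_edgeSet.mp hi.1) hadj

end PG
end

section
/- Let G = (V,E) be a connected simple graph, p ∈ V, and let B and B′ be borders of G with sides P₁ ∋ p, P₂ and P₁′ ∋ p, P₂′ respectively. If the vertex border of B opposite to p equals the vertex border of B′ opposite to p, then P₁ = P₁′ and B = B′; in fact P₁ is exactly the connected component of p in the graph obtained from G by deleting the vertices of this common vertex border S. (A border is uniquely determined, given p, by its vertex border on the side not containing p.) -/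
open scoped BigOperators Classical

namespace PG

variable {V : Type*}

lemma key_side_eq {V : Type*} (G : SimpleGraph V) (p : V) (B : Set (Sym2 V)) (P₁ P₂ : Set V)
    (hB : IsBorderWith G B P₁ P₂) (hp : p ∈ P₁) :
    P₁ = {q : V | ∃ (hpm : p ∈ (vertexBorder B P₂)ᶜ) (hqm : q ∈ (vertexBorder B P₂)ᶜ),
      (G.induce (vertexBorder B P₂)ᶜ).Reachable ⟨p, hpm⟩ ⟨q, hqm⟩} := by
  set S := vertexBorder B P₂ with hSdef
  have hsub : P₁ ⊆ Sᶜ := by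
    intro v hv hvS
    exact hB.disj.ne_of_mem hv hvS.1 rfl
  have hP₂ : ∀ v, v ∉ P₁ → v ∈ P₂ := by
    intro v hv
    have := hB.cover
    rcases (Set.eq_univ_iff_forall.mp this v) with h | h
    · exact absurd h hv
    · exact h
  have hpm : p ∈ Sᶜ := hsub hp
  ext q
  constructor
  · intro hq
    refine ⟨hpm, hsub hq, ?_⟩
    have hr : (G.induce P₁).Reachable ⟨p, hp⟩ ⟨q, hq⟩ := hB.conn₁ _ _
    exact SimpleGraph.Reachable.map
      (⟨fun v => ⟨v.1, hsub v.2⟩, fun {a b} h => h⟩ : G.induce P₁ →g G.induce Sᶜ) hr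
  · rintro ⟨hpm', hqm, hr⟩
    -- walk induction: every vertex reachable from p in induce Sᶜ stays in P₁
    obtain ⟨w⟩ := hr
    have main : ∀ (x y : ↑(Sᶜ)) (_ : (G.induce Sᶜ).Walk x y), x.1 ∈ P₁ → y.1 ∈ P₁ := by
      intro x y w
      induction w with
      | nil => exact id
      | cons h w ih =>
        rename_i a b c
        intro ha
        apply ih
        by_contra hb
        have hb2 : b.1 ∈ P₂ := hP₂ _ hb
        have hadj : G.Adj a.1 b.1 := h
        have heB : s(a.1, b.1) ∈ B := by
          rw [hB.eq_edges]
          exact ⟨G.mem_edgeSet.mpr hadj, a.1, ha, b.1, hb2, rfl⟩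
        have : b.1 ∈ S := ⟨hb2, s(a.1, b.1), heB, by simp⟩
        exact b.2 this
    exact main _ _ w hp

/-- a border is uniquely determined, given `p`, by its vertex border on
the side not containing `p`; moreover the side containing `p` is the connected
component of `p` in the graph obtained by deleting that vertex border. -/
theorem stmt_3 {V : Type*} (G : SimpleGraph V) (hG : G.Connected) (p : V)
    (B B' : Set (Sym2 V)) (P₁ P₂ P₁' P₂' : Set V)
    (hB : IsBorderWith G B P₁ P₂) (hB' : IsBorderWith G B' P₁' P₂')
    (hp : p ∈ P₁) (hp' : p ∈ P₁')
    (hS : vertexBorder B P₂ = vertexBorder B' P₂') :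
    P₁ = P₁' ∧ B = B' ∧
    P₁ = {q : V | ∃ (hpm : p ∈ (vertexBorder B P₂)ᶜ) (hqm : q ∈ (vertexBorder B P₂)ᶜ),
      (G.induce (vertexBorder B P₂)ᶜ).Reachable ⟨p, hpm⟩ ⟨q, hqm⟩} := by
  have h1 := key_side_eq G p B P₁ P₂ hB hp
  have h2 := key_side_eq G p B' P₁' P₂' hB' hp'
  rw [← hS] at h2
  have hP₁ : P₁ = P₁' := h1.trans h2.symm
  have hcompl : ∀ (Pa Pb : Set V), Disjoint Pa Pb → Pa ∪ Pb = Set.univ → Pb = Paᶜ := by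
    intro Pa Pb hd hc
    ext v
    constructor
    · intro hv hv'
      exact hd.ne_of_mem hv' hv rfl
    · intro hv
      rcases Set.eq_univ_iff_forall.mp hc v with h | h
      · exact absurd h hv
      · exact h
  have hP₂ : P₂ = P₂' := by
    rw [hcompl _ _ hB.disj hB.cover, hcompl _ _ hB'.disj hB'.cover, hP₁]
  refine ⟨hP₁, ?_, h1⟩
  rw [hB.eq_edges, hB'.eq_edges, hP₁, hP₂]

end PG
end

section
/- Consider the zero-field Ising model on a finite connected simple graph G = (V,E) with couplings J(e) ≥ J_min > 0 at inverse temperature β > 0. For every border B of G, the Gibbs probability that every edge of B is a disagreement edge satisfies P_β( B ⊆ D(σ) ) ≤ e^{−2 β J_min |B|}. -/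
open scoped BigOperators Classical

namespace PG

variable {V : Type*}

/-- If the spins disagree on an edge, the spin product is `-1`. -/
lemma spinProd_eq_neg_one (τ : V → Bool) (e : Sym2 V)
    (h : Disagrees (toSpin τ) e) : spinProd (toSpin τ) e = -1 := by
  induction e using Sym2.ind with
  | _ i j =>
    have h' : toSpin τ i ≠ toSpin τ j := h
    cases hi : τ i <;> cases hj : τ j <;>
      simp [toSpin, hi, hj, spinProd] at h' ⊢

/-- Peierls estimate — the Gibbs probability that all edges of a border
are disagreement edges is at most `exp (−2 β Jmin |B|)`. -/
theorem stmt_5 {V : Type*} [Fintype V] [DecidableEq V] (G : SimpleGraph V)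
    [DecidableRel G.Adj] (hG : G.Connected)
    (J : Sym2 V → ℝ) (Jmin : ℝ) (hJmin : 0 < Jmin)
    (hJ : ∀ e ∈ G.edgeFinset, Jmin ≤ J e) (β : ℝ) (hβ : 0 < β)
    (B : Finset (Sym2 V)) (hB : IsBorder G ↑B) :
    gibbsProb G J β (fun σ => ↑B ⊆ disagreeSet G σ) ≤
      Real.exp (-2 * β * Jmin * (B.card : ℝ)) := by
  classical
  obtain ⟨P₁, P₂, hBW⟩ := hB
  have hpart : ∀ v, v ∉ P₁ → v ∈ P₂ := by
    intro v hv
    have hv' : v ∈ P₁ ∪ P₂ := hBW.cover ▸ Set.mem_univ v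
    exact hv'.resolve_left hv
  have hdisj : ∀ v, v ∈ P₁ → v ∉ P₂ := fun v h₁ h₂ =>
    Set.disjoint_left.mp hBW.disj h₁ h₂
  set flip : (V → Bool) → (V → Bool) := fun τ v => if v ∈ P₁ then !(τ v) else τ v
    with hflipdef
  have hinv : Function.Involutive flip := by
    intro τ; funext v; by_cases h : v ∈ P₁ <;> simp [flip, h]
  have hspin : ∀ (τ : V → Bool) (v : V),
      (toSpin (flip τ) v : ℤ) = (if v ∈ P₁ then -1 else 1) * toSpin τ v := by
    intro τ v
    by_cases h : v ∈ P₁ <;> cases hτ : τ v <;> simp [flip, toSpin, h, hτ]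
  have hBmem : ∀ i j, G.Adj i j →
      (s(i,j) ∈ B ↔ ((i ∈ P₁ ∧ j ∈ P₂) ∨ (j ∈ P₁ ∧ i ∈ P₂))) := by
    intro i j hadj
    constructor
    · intro h
      have h' : (s(i,j) : Sym2 V) ∈ (↑B : Set (Sym2 V)) := h
      rw [hBW.eq_edges] at h'
      obtain ⟨-, a, ha, b, hb, heq⟩ := h'
      rw [Sym2.eq_iff] at heq
      rcases heq with ⟨rfl, rfl⟩ | ⟨rfl, rfl⟩
      · exact Or.inl ⟨ha, hb⟩
      · exact Or.inr ⟨ha, hb⟩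
    · intro h
      have h' : (s(i,j) : Sym2 V) ∈ (↑B : Set (Sym2 V)) := by
        rw [hBW.eq_edges]
        rcases h with ⟨h1, h2⟩ | ⟨h1, h2⟩
        · exact ⟨hadj, i, h1, j, h2, rfl⟩
        · exact ⟨hadj, j, h1, i, h2, Sym2.eq_swap⟩
      exact h'
  have hBsub : B ⊆ G.edgeFinset := by
    intro e he
    have h' : (e : Sym2 V) ∈ (↑B : Set (Sym2 V)) := he
    rw [hBW.eq_edges] at h'
    exact SimpleGraph.mem_edgeFinset.mpr h'.1
  have hsp : ∀ (τ : V → Bool) (e : Sym2 V), e ∈ G.edgeFinset →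
      (spinProd (toSpin (flip τ)) e : ℤ) =
        (if e ∈ B then -1 else 1) * spinProd (toSpin τ) e := by
    intro τ e he
    induction e using Sym2.ind with
    | _ i j =>
      have hadj : G.Adj i j := by
        rwa [SimpleGraph.mem_edgeFinset, SimpleGraph.mem_edgeSet] at he
      have hBij := hBmem i j hadj
      simp only [spinProd, Sym2.lift_mk]
      rw [hspin τ i, hspin τ j]
      by_cases h1 : i ∈ P₁ <;> by_cases h2 : j ∈ P₁
      · have hnB : s(i,j) ∉ B := by
          rw [hBij]; push_neg
          exact ⟨fun _ => hdisj j h2, fun _ => hdisj i h1⟩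
        simp only [h1, h2, hnB, if_true, if_false]; ring
      · have hB' : s(i,j) ∈ B := hBij.mpr (Or.inl ⟨h1, hpart j h2⟩)
        simp only [h1, h2, hB', if_true, if_false]; ring
      · have hB' : s(i,j) ∈ B := hBij.mpr (Or.inr ⟨h2, hpart i h1⟩)
        simp only [h1, h2, hB', if_true, if_false]; ring
      · have hnB : s(i,j) ∉ B := by
          rw [hBij]; push_neg
          exact ⟨fun h => absurd h h1, fun h => absurd h h2⟩
        simp only [h1, h2, hnB, if_true, if_false]; ring
  have hham : ∀ τ : V → Bool, hamiltonian G J (toSpin (flip τ)) =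
      hamiltonian G J (toSpin τ) + 2 * ∑ e ∈ B, J e * (spinProd (toSpin τ) e : ℝ) := by
    intro τ
    unfold hamiltonian
    have hterm : ∀ e ∈ G.edgeFinset,
        J e * ((spinProd (toSpin (flip τ)) e : ℤ) : ℝ) =
        J e * ((spinProd (toSpin τ) e : ℤ) : ℝ) -
          (if e ∈ B then 2 * (J e * ((spinProd (toSpin τ) e : ℤ) : ℝ)) else 0) := by
      intro e he
      rw [hsp τ e he]
      by_cases h : e ∈ B <;> simp only [h, if_true, if_false] <;> push_cast <;> ring
    rw [Finset.sum_congr rfl hterm, Finset.sum_sub_distrib]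
    have hite : (∑ e ∈ G.edgeFinset,
        if e ∈ B then 2 * (J e * ((spinProd (toSpin τ) e : ℤ) : ℝ)) else 0)
        = ∑ e ∈ B, 2 * (J e * ((spinProd (toSpin τ) e : ℤ) : ℝ)) := by
      rw [Finset.sum_ite_mem, Finset.inter_eq_right.mpr hBsub]
    rw [hite, Finset.mul_sum]
    ring
  set c := Real.exp (-2 * β * Jmin * (B.card : ℝ)) with hc
  have key : ∀ τ : V → Bool,
      (if (↑B : Set (Sym2 V)) ⊆ disagreeSet G (toSpin τ) then (1:ℝ) else 0) *
        Real.exp (-β * hamiltonian G J (toSpin τ)) ≤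
      c * Real.exp (-β * hamiltonian G J (toSpin (flip τ))) := by
    intro τ
    by_cases hev : (↑B : Set (Sym2 V)) ⊆ disagreeSet G (toSpin τ)
    · simp only [hev, if_true, one_mul]
      have hsum : ∑ e ∈ B, J e * (spinProd (toSpin τ) e : ℝ) = -∑ e ∈ B, J e := by
        rw [← Finset.sum_neg_distrib]
        refine Finset.sum_congr rfl fun e he => ?_
        have hd : e ∈ disagreeSet G (toSpin τ) := hev he
        rw [spinProd_eq_neg_one τ e hd.2]
        push_cast; ring
      have hJsum : (B.card : ℝ) * Jmin ≤ ∑ e ∈ B, J e := by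
        calc (B.card : ℝ) * Jmin = ∑ _e ∈ B, Jmin := by
              rw [Finset.sum_const, nsmul_eq_mul]
          _ ≤ ∑ e ∈ B, J e := Finset.sum_le_sum fun e he => hJ e (hBsub he)
      rw [hc, ← Real.exp_add]
      apply Real.exp_le_exp.mpr
      rw [hham τ, hsum]
      have : 2 * β * ((B.card : ℝ) * Jmin) ≤ 2 * β * ∑ e ∈ B, J e :=
        mul_le_mul_of_nonneg_left hJsum (by positivity)
      nlinarith
    · simp only [hev, if_false, zero_mul]
      positivity
  have hZpos : 0 < partitionZ G J β := by
    unfold partitionZ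
    exact Finset.sum_pos (fun τ _ => Real.exp_pos _) Finset.univ_nonempty
  have hflipsum : ∑ τ : V → Bool,
      Real.exp (-β * hamiltonian G J (toSpin (flip τ))) = partitionZ G J β := by
    unfold partitionZ
    exact Fintype.sum_equiv (Function.Involutive.toPerm flip hinv) _ _ (fun τ => rfl)
  unfold gibbsProb gibbsExp
  rw [div_le_iff₀ hZpos]
  calc (∑ τ : V → Bool, (if (↑B : Set (Sym2 V)) ⊆ disagreeSet G (toSpin τ)
          then (1:ℝ) else 0) * Real.exp (-β * hamiltonian G J (toSpin τ)))
      ≤ ∑ τ : V → Bool, c * Real.exp (-β * hamiltonian G J (toSpin (flip τ))) :=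
        Finset.sum_le_sum fun τ _ => key τ
    _ = c * ∑ τ : V → Bool, Real.exp (-β * hamiltonian G J (toSpin (flip τ))) := by
        rw [Finset.mul_sum]
    _ = c * partitionZ G J β := by rw [hflipsum]


end PG
end

section
/- Consider the zero-field Ising model on a finite connected simple graph G = (V,E) with couplings J(e) ≥ J_min > 0 at inverse temperature β > 0, and fix p ∈ V. The Gibbs probability that there exists a border B of G with B ⊆ D(σ) and with p internal to B is at most Σ_{b=1}^{|E|} μ^p(b) · e^{−2 β J_min b}. -/
open scoped BigOperators Classical

namespace PG

variable {V : Type*}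

/-! ### Auxiliary lemmas for the Peierls argument -/

/-- Flip the spins inside a set `P`. -/
noncomputable def flipSide (P : Set V) (τ : V → Bool) : V → Bool :=
  fun v => if v ∈ P then !τ v else τ v

lemma flipSide_involutive (P : Set V) : Function.Involutive (flipSide P) := by
  intro τ; funext v; by_cases h : v ∈ P <;> simp [flipSide, h]

lemma toSpin_flipSide_mem (P : Set V) (τ : V → Bool) {v : V} (h : v ∈ P) :
    toSpin (flipSide P τ) v = - toSpin τ v := by
  simp only [flipSide, toSpin, if_pos h]; cases τ v <;> simp

lemma toSpin_flipSide_notMem (P : Set V) (τ : V → Bool) {v : V} (h : v ∉ P) :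
    toSpin (flipSide P τ) v = toSpin τ v := by
  simp only [flipSide, toSpin, if_neg h]

lemma toSpin_values (τ : V → Bool) (v : V) : toSpin τ v = 1 ∨ toSpin τ v = -1 := by
  unfold toSpin; split <;> simp

lemma prod_eq_neg_one {a b : ℤ} (ha : a = 1 ∨ a = -1) (hb : b = 1 ∨ b = -1)
    (h : a ≠ b) : a * b = -1 := by
  rcases ha with rfl | rfl <;> rcases hb with rfl | rfl <;> simp_all

lemma spinProd_mk (σ : V → ℤ) (i j : V) : spinProd σ s(i, j) = σ i * σ j := rfl

lemma disagrees_mk (σ : V → ℤ) (i j : V) : Disagrees σ s(i, j) ↔ σ i ≠ σ j := Iff.rfl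

lemma border_subset_edgeFinset [Fintype V] (G : SimpleGraph V) [Fintype G.edgeSet]
    {B : Finset (Sym2 V)} {P₁ P₂ : Set V} (hB : IsBorderWith G ↑B P₁ P₂) :
    B ⊆ G.edgeFinset := by
  intro e he
  have h : e ∈ (↑B : Set (Sym2 V)) := he
  rw [hB.eq_edges] at h
  exact SimpleGraph.mem_edgeFinset.mpr h.1

lemma walk_cross (G : SimpleGraph V) {P₁ P₂ : Set V} (hd : Disjoint P₁ P₂)
    (hc : P₁ ∪ P₂ = Set.univ) {a b : V} (w : G.Walk a b) (ha : a ∈ P₁) (hb : b ∈ P₂) :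
    ∃ i ∈ P₁, ∃ j ∈ P₂, G.Adj i j := by
  induction w with
  | nil => exact absurd hb (Set.disjoint_left.mp hd ha)
  | @cons u x b' h w ih =>
    by_cases hx : x ∈ P₁
    · exact ih hx hb
    · have hx2 : x ∈ P₂ := ((Set.mem_union _ _ _).mp (hc ▸ Set.mem_univ x)).resolve_left hx
      exact ⟨u, ha, x, hx2, h⟩

lemma border_nonempty (G : SimpleGraph V) (hG : G.Connected)
    {B : Finset (Sym2 V)} {P₁ P₂ : Set V} (hB : IsBorderWith G ↑B P₁ P₂) :
    B.Nonempty := by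
  obtain ⟨a, ha⟩ := hB.ne₁
  obtain ⟨b, hb⟩ := hB.ne₂
  obtain ⟨w⟩ := hG.preconnected a b
  obtain ⟨i, hi, j, hj, hij⟩ := walk_cross G hB.disj hB.cover w ha hb
  have : s(i, j) ∈ (↑B : Set (Sym2 V)) := by
    rw [hB.eq_edges]
    exact ⟨G.mem_edgeSet.mpr hij, i, hi, j, hj, rfl⟩
  exact ⟨s(i, j), this⟩

lemma ham_flip [Fintype V] (G : SimpleGraph V) [Fintype G.edgeSet]
    (J : Sym2 V → ℝ) {B : Finset (Sym2 V)} {P₁ P₂ : Set V}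
    (hB : IsBorderWith G ↑B P₁ P₂) (τ : V → Bool)
    (hD : ↑B ⊆ disagreeSet G (toSpin τ)) :
    hamiltonian G J (toSpin τ) =
      hamiltonian G J (toSpin (flipSide P₁ τ)) + 2 * ∑ e ∈ B, J e := by
  have hsub : B ⊆ G.edgeFinset := border_subset_edgeFinset G hB
  have key : ∀ e ∈ G.edgeFinset,
      J e * ((spinProd (toSpin (flipSide P₁ τ)) e : ℤ) : ℝ) =
        J e * ((spinProd (toSpin τ) e : ℤ) : ℝ) + (if e ∈ B then 2 * J e else 0) := by
    intro e he
    by_cases heB : e ∈ B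
    · have hmem : e ∈ (↑B : Set (Sym2 V)) := heB
      have hdis : Disagrees (toSpin τ) e := (hD hmem).2
      rw [hB.eq_edges] at hmem
      obtain ⟨-, i, hi, j, hj, rfl⟩ := hmem
      have hj1 : j ∉ P₁ := Set.disjoint_right.mp hB.disj hj
      have hsp : spinProd (toSpin τ) s(i, j) = -1 :=
        prod_eq_neg_one (toSpin_values τ i) (toSpin_values τ j) ((disagrees_mk _ i j).mp hdis)
      have hsp' : spinProd (toSpin (flipSide P₁ τ)) s(i, j) = 1 := by
        rw [spinProd_mk, toSpin_flipSide_mem P₁ τ hi, toSpin_flipSide_notMem P₁ τ hj1,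
          neg_mul, ← spinProd_mk, hsp]
        ring
      rw [hsp, hsp', if_pos heB]
      push_cast; ring
    · rw [if_neg heB, add_zero]
      induction e using Sym2.ind with
      | _ i j =>
        have hsame : spinProd (toSpin (flipSide P₁ τ)) s(i, j) = spinProd (toSpin τ) s(i, j) := by
          by_cases hi : i ∈ P₁ <;> by_cases hj : j ∈ P₁
          · rw [spinProd_mk, toSpin_flipSide_mem P₁ τ hi, toSpin_flipSide_mem P₁ τ hj,
              spinProd_mk]; ring
          · exfalso
            apply heB
            have hj2 : j ∈ P₂ := ((Set.mem_union _ _ _).mp (hB.cover ▸ Set.mem_univ j)).resolve_left hj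
            have : s(i, j) ∈ (↑B : Set (Sym2 V)) := by
              rw [hB.eq_edges]
              exact ⟨SimpleGraph.mem_edgeFinset.mp he, i, hi, j, hj2, rfl⟩
            exact this
          · exfalso
            apply heB
            have hi2 : i ∈ P₂ := ((Set.mem_union _ _ _).mp (hB.cover ▸ Set.mem_univ i)).resolve_left hi
            have : s(i, j) ∈ (↑B : Set (Sym2 V)) := by
              rw [hB.eq_edges]
              exact ⟨SimpleGraph.mem_edgeFinset.mp he, j, hj, i, hi2, Sym2.eq_swap.symm⟩
            exact this
          · rw [spinProd_mk, toSpin_flipSide_notMem P₁ τ hi, toSpin_flipSide_notMem P₁ τ hj,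
              spinProd_mk]
        rw [hsame]
  have hsum : ∑ e ∈ G.edgeFinset, J e * ((spinProd (toSpin (flipSide P₁ τ)) e : ℤ) : ℝ)
      = (∑ e ∈ G.edgeFinset, J e * ((spinProd (toSpin τ) e : ℤ) : ℝ)) + 2 * ∑ e ∈ B, J e := by
    rw [Finset.sum_congr rfl key, Finset.sum_add_distrib]
    congr 1
    rw [Finset.sum_ite_mem, Finset.inter_eq_right.mpr hsub, Finset.mul_sum]
  unfold hamiltonian
  rw [hsum]
  ring

lemma key_bound [Fintype V] [DecidableEq V] (G : SimpleGraph V) [Fintype G.edgeSet]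
    (J : Sym2 V → ℝ) {Jmin β : ℝ} (hJmin : 0 < Jmin)
    (hJ : ∀ e ∈ G.edgeFinset, Jmin ≤ J e) (hβ : 0 < β)
    {B : Finset (Sym2 V)} {P₁ P₂ : Set V} (hB : IsBorderWith G ↑B P₁ P₂) :
    ∑ τ ∈ Finset.univ.filter (fun τ : V → Bool => ↑B ⊆ disagreeSet G (toSpin τ)),
      Real.exp (-β * hamiltonian G J (toSpin τ)) ≤
      Real.exp (-2 * β * Jmin * (B.card : ℝ)) * partitionZ G J β := by
  have hsub := border_subset_edgeFinset G hB
  have hJB : (B.card : ℝ) * Jmin ≤ ∑ e ∈ B, J e := by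
    calc (B.card : ℝ) * Jmin = ∑ _e ∈ B, Jmin := by
          rw [Finset.sum_const, nsmul_eq_mul]
      _ ≤ ∑ e ∈ B, J e := Finset.sum_le_sum fun e he => hJ e (hsub he)
  set s := Finset.univ.filter (fun τ : V → Bool => ↑B ⊆ disagreeSet G (toSpin τ)) with hs
  have step : ∀ τ ∈ s,
      Real.exp (-β * hamiltonian G J (toSpin τ)) ≤
      Real.exp (-2 * β * Jmin * (B.card : ℝ)) *
        Real.exp (-β * hamiltonian G J (toSpin (flipSide P₁ τ))) := by
    intro τ hτ
    rw [hs, Finset.mem_filter] at hτ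
    rw [ham_flip G J hB τ hτ.2, ← Real.exp_add]
    apply Real.exp_le_exp.mpr
    have h2 : 2 * β * ((B.card : ℝ) * Jmin) ≤ 2 * β * (∑ e ∈ B, J e) :=
      mul_le_mul_of_nonneg_left hJB (by positivity)
    nlinarith
  calc ∑ τ ∈ s, Real.exp (-β * hamiltonian G J (toSpin τ))
      ≤ ∑ τ ∈ s, Real.exp (-2 * β * Jmin * (B.card : ℝ)) *
          Real.exp (-β * hamiltonian G J (toSpin (flipSide P₁ τ))) :=
        Finset.sum_le_sum step
    _ = Real.exp (-2 * β * Jmin * (B.card : ℝ)) *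
          ∑ τ ∈ s, Real.exp (-β * hamiltonian G J (toSpin (flipSide P₁ τ))) := by
        rw [Finset.mul_sum]
    _ ≤ Real.exp (-2 * β * Jmin * (B.card : ℝ)) * partitionZ G J β := by
        apply mul_le_mul_of_nonneg_left _ (Real.exp_pos _).le
        have himg : ∑ τ ∈ s.image (flipSide P₁),
            Real.exp (-β * hamiltonian G J (toSpin τ))
            = ∑ τ ∈ s, Real.exp (-β * hamiltonian G J (toSpin (flipSide P₁ τ))) :=
          Finset.sum_image (fun a _ b _ h => (flipSide_involutive P₁).injective h)
        rw [← himg]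
        unfold partitionZ
        exact Finset.sum_le_sum_of_subset_of_nonneg (Finset.subset_univ _)
          (fun _ _ _ => (Real.exp_pos _).le)


set_option maxHeartbeats 1000000 in
/-- the Gibbs probability that some border made of disagreement edges has
`p` internal to it is at most `Σ_{b=1}^{|E|} μ^p(b) · exp (−2 β Jmin b)`. -/
theorem stmt_6 {V : Type*} [Fintype V] [DecidableEq V] (G : SimpleGraph V)
    [DecidableRel G.Adj] (hG : G.Connected)
    (J : Sym2 V → ℝ) (Jmin : ℝ) (hJmin : 0 < Jmin)
    (hJ : ∀ e ∈ G.edgeFinset, Jmin ≤ J e) (β : ℝ) (hβ : 0 < β) (p : V) :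
    gibbsProb G J β (fun σ => ∃ B : Finset (Sym2 V),
        IsBorder G ↑B ∧ ↑B ⊆ disagreeSet G σ ∧ InternalTo G p ↑B) ≤
      ∑ b ∈ Finset.Icc 1 G.edgeFinset.card,
        (mu G p b : ℝ) * Real.exp (-2 * β * Jmin * (b : ℝ)) := by
  classical
  set 𝒮 : Finset (Finset (Sym2 V)) :=
    Finset.univ.filter (fun B : Finset (Sym2 V) => InternalTo G p ↑B) with h𝒮
  have hZpos : 0 < partitionZ G J β := by
    unfold partitionZ
    exact Finset.sum_pos (fun τ _ => Real.exp_pos _) Finset.univ_nonempty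
  unfold gibbsProb gibbsExp
  rw [div_le_iff₀ hZpos]
  beta_reduce
  have hnum : (∑ τ : V → Bool,
      (@ite ℝ (∃ B : Finset (Sym2 V), IsBorder G ↑B ∧ ↑B ⊆ disagreeSet G (toSpin τ) ∧
          InternalTo G p ↑B) (Classical.propDecidable _) (1:ℝ) 0) *
        Real.exp (-β * hamiltonian G J (toSpin τ)))
      ≤ ∑ B ∈ 𝒮, Real.exp (-2 * β * Jmin * (B.card : ℝ)) * partitionZ G J β := by
    have h1 : ∀ τ : V → Bool,
        (@ite ℝ (∃ B : Finset (Sym2 V), IsBorder G ↑B ∧ ↑B ⊆ disagreeSet G (toSpin τ) ∧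
            InternalTo G p ↑B) (Classical.propDecidable _) (1:ℝ) 0)
        ≤ ∑ B ∈ 𝒮, (if ↑B ⊆ disagreeSet G (toSpin τ) then (1:ℝ) else 0) := by
      intro τ
      split
      · next h =>
          obtain ⟨B, _, hBD, hBint⟩ := h
          have hB𝒮 : B ∈ 𝒮 := by
            rw [h𝒮, Finset.mem_filter]; exact ⟨Finset.mem_univ _, hBint⟩
          calc (1:ℝ) = if ↑B ⊆ disagreeSet G (toSpin τ) then (1:ℝ) else 0 :=
                (if_pos hBD).symm
            _ ≤ ∑ B ∈ 𝒮, (if ↑B ⊆ disagreeSet G (toSpin τ) then (1:ℝ) else 0) :=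
                Finset.single_le_sum (f := fun B : Finset (Sym2 V) =>
                  (if ↑B ⊆ disagreeSet G (toSpin τ) then (1:ℝ) else 0))
                  (fun _ _ => by positivity) hB𝒮
      · next h => exact Finset.sum_nonneg (fun _ _ => by positivity)
    calc (∑ τ : V → Bool,
        (@ite ℝ (∃ B : Finset (Sym2 V), IsBorder G ↑B ∧ ↑B ⊆ disagreeSet G (toSpin τ) ∧
            InternalTo G p ↑B) (Classical.propDecidable _) (1:ℝ) 0) *
          Real.exp (-β * hamiltonian G J (toSpin τ)))
        ≤ ∑ τ : V → Bool,
            (∑ B ∈ 𝒮, (if ↑B ⊆ disagreeSet G (toSpin τ) then (1:ℝ) else 0)) *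
              Real.exp (-β * hamiltonian G J (toSpin τ)) :=
          Finset.sum_le_sum (fun τ _ =>
            mul_le_mul_of_nonneg_right (h1 τ) (Real.exp_pos _).le)
      _ = ∑ B ∈ 𝒮, ∑ τ : V → Bool,
            (if ↑B ⊆ disagreeSet G (toSpin τ) then (1:ℝ) else 0) *
              Real.exp (-β * hamiltonian G J (toSpin τ)) := by
          rw [Finset.sum_comm]
          exact Finset.sum_congr rfl (fun τ _ => Finset.sum_mul _ _ _)
      _ ≤ ∑ B ∈ 𝒮, Real.exp (-2 * β * Jmin * (B.card : ℝ)) * partitionZ G J β := by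
          apply Finset.sum_le_sum
          intro B hB
          obtain ⟨P₁, P₂, hBW, -, -⟩ := (Finset.mem_filter.mp (h𝒮 ▸ hB)).2
          have hrw : (∑ τ : V → Bool,
              (if ↑B ⊆ disagreeSet G (toSpin τ) then (1:ℝ) else 0) *
                Real.exp (-β * hamiltonian G J (toSpin τ)))
              = ∑ τ ∈ Finset.univ.filter
                  (fun τ : V → Bool => ↑B ⊆ disagreeSet G (toSpin τ)),
                  Real.exp (-β * hamiltonian G J (toSpin τ)) := by
            rw [Finset.sum_filter]
            exact Finset.sum_congr rfl (fun τ _ => by split <;> simp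
            )
          rw [hrw]
          exact key_bound G J hJmin hJ hβ hBW
  refine hnum.trans ?_
  rw [← Finset.sum_mul]
  apply mul_le_mul_of_nonneg_right _ hZpos.le
  -- grouping by cardinality
  have hmaps : ∀ B ∈ 𝒮, B.card ∈ Finset.Icc 1 G.edgeFinset.card := by
    intro B hB
    obtain ⟨P₁, P₂, hBW, -, -⟩ := (Finset.mem_filter.mp (h𝒮 ▸ hB)).2
    rw [Finset.mem_Icc]
    exact ⟨(border_nonempty G hG hBW).card_pos,
      Finset.card_le_card (border_subset_edgeFinset G hBW)⟩
  rw [← Finset.sum_fiberwise_of_maps_to hmaps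
    (fun B : Finset (Sym2 V) => Real.exp (-2 * β * Jmin * (B.card : ℝ)))]
  apply Finset.sum_le_sum
  intro b hb
  have hconst : (∑ B ∈ 𝒮.filter (fun B => B.card = b),
      Real.exp (-2 * β * Jmin * (B.card : ℝ)))
      = (𝒮.filter (fun B => B.card = b)).card * Real.exp (-2 * β * Jmin * (b : ℝ)) := by
    rw [Finset.sum_congr rfl (fun B hB => by
      rw [(Finset.mem_filter.mp hB).2]), Finset.sum_const, nsmul_eq_mul]
  rw [hconst]
  have hcard : (𝒮.filter (fun B => B.card = b)).card = mu G p b := by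
    unfold mu
    have hseteq : {B : Finset (Sym2 V) | B.card = b ∧ InternalTo G p ↑B}
        = ↑(𝒮.filter (fun B => B.card = b)) := by
      ext B
      simp only [Set.mem_setOf_eq, Finset.coe_filter, h𝒮, Finset.mem_filter,
        Finset.mem_univ, true_and, Set.mem_setOf_eq]
      tauto
    rw [hseteq, Set.ncard_coe_finset]
  rw [hcard]


end PG
end

section
/- Let G be a simple graph in which every vertex has degree at most z, where z ≥ 2, let p be a vertex of G, and let b ≥ 1 be an integer. Then the number of subsets A of the vertex set with |A| = b, p ∈ A, and A inducing a connected subgraph of G is at most Σ_{k=b−1}^{2zb} z^k = (z^{2zb+1} − z^{b−1})/(z − 1). In particular, the number of connected vertex sets of cardinality b containing a fixed vertex grows at most exponentially in b. -/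
open scoped BigOperators Classical

namespace PG

variable {V : Type*}

/-- The restriction of `G` to edges inside `A`, as a graph on the same vertex type. -/
def within (G : SimpleGraph V) (A : Set V) : SimpleGraph V where
  Adj x y := G.Adj x y ∧ x ∈ A ∧ y ∈ A
  symm := ⟨fun x y ⟨h, hx, hy⟩ => ⟨h.symm, hy, hx⟩⟩
  loopless := ⟨fun x ⟨h, _⟩ => G.loopless.irrefl x h⟩

lemma chain_cons' {R : V → V → Prop} {a b : V} {l : List V} :
    List.Chain R a (b :: l) ↔ R a b ∧ List.Chain R b l := List.isChain_cons_cons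

lemma chain_detour {R : V → V → Prop} (hsymm : ∀ a b, R a b → R b a) :
    ∀ (l : List V) (p : V), List.Chain R p l → ∀ u v, R u v → (u = p ∨ u ∈ l) →
    ∃ m : List V, List.Chain R p m ∧ m.length = l.length + 2 ∧
      ∀ x, (x = p ∨ x ∈ m) ↔ (x = p ∨ x ∈ l ∨ x = v) := by
  intro l
  induction l with
  | nil =>
    intro p _ u v huv hu
    rcases hu with rfl | h
    · exact ⟨[v, u], chain_cons'.2 ⟨huv, chain_cons'.2 ⟨hsymm _ _ huv, List.Chain.nil⟩⟩, rfl, by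
        intro x; simp; tauto⟩
    · simp at h
  | cons a l ih =>
    intro p hc u v huv hu
    rw [chain_cons'] at hc
    rcases hu with rfl | hu
    · refine ⟨v :: u :: a :: l, ?_, rfl, ?_⟩
      · rw [chain_cons', chain_cons']
        exact ⟨huv, hsymm _ _ huv, List.Chain.cons hc.1 hc.2⟩
      · intro x; simp; tauto
    · obtain ⟨m, hm, hlen, hmem⟩ := ih a hc.2 u v huv (by simpa using hu)
      refine ⟨a :: m, ?_, by simp [hlen], ?_⟩
      · rw [chain_cons']; exact ⟨hc.1, hm⟩
      · intro x
        have := hmem x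
        simp at this ⊢
        tauto

lemma ncard_biUnion_le {α β : Type*} (s : Finset α) (f : α → Set β) :
    (⋃ a ∈ s, f a).ncard ≤ ∑ a ∈ s, (f a).ncard := by
  classical
  induction s using Finset.induction_on with
  | empty => simp
  | insert _ _ h ih =>
    rw [Finset.set_biUnion_insert, Finset.sum_insert h]
    exact (Set.ncard_union_le _ _).trans (Nat.add_le_add_left ih _)


lemma chain_count (G : SimpleGraph V) (z : ℕ)
    (hdeg : ∀ v : V, (G.neighborSet v).Finite ∧ (G.neighborSet v).ncard ≤ z) :
    ∀ (n : ℕ) (q : V), {l : List V | List.Chain G.Adj q l ∧ l.length = n}.Finite ∧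
      {l : List V | List.Chain G.Adj q l ∧ l.length = n}.ncard ≤ z ^ n := by
  intro n
  induction n with
  | zero =>
    intro q
    have h : {l : List V | List.Chain G.Adj q l ∧ l.length = 0} = {([] : List V)} := by
      ext l; simp [List.length_eq_zero_iff]
      rintro rfl; exact List.Chain.nil
    rw [h]; simp
  | succ n IH =>
    intro q
    set N := (hdeg q).1.toFinset with hN
    have hsub : {l : List V | List.Chain G.Adj q l ∧ l.length = n + 1} ⊆
        ⋃ r ∈ N, (List.cons r '' {l : List V | List.Chain G.Adj r l ∧ l.length = n}) := by
      rintro l ⟨hc, hlen⟩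
      cases l with
      | nil => simp at hlen
      | cons r l' =>
        rw [chain_cons'] at hc
        simp only [Set.mem_iUnion]
        exact ⟨r, (hdeg q).1.mem_toFinset.mpr hc.1, l', ⟨hc.2, by simpa using hlen⟩, rfl⟩
    have hfin : (⋃ r ∈ N, (List.cons r '' {l : List V | List.Chain G.Adj r l ∧ l.length = n})).Finite :=
      N.finite_toSet.biUnion fun r _ => (IH r).1.image _
    refine ⟨hfin.subset hsub, ?_⟩
    calc {l : List V | List.Chain G.Adj q l ∧ l.length = n + 1}.ncard
        ≤ (⋃ r ∈ N, (List.cons r '' {l : List V | List.Chain G.Adj r l ∧ l.length = n})).ncard :=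
          Set.ncard_le_ncard hsub hfin
      _ ≤ ∑ r ∈ N, (List.cons r '' {l : List V | List.Chain G.Adj r l ∧ l.length = n}).ncard :=
          ncard_biUnion_le _ _
      _ ≤ ∑ _r ∈ N, z ^ n := by
          refine Finset.sum_le_sum fun r _ => ?_
          exact (Set.ncard_image_le (IH r).1).trans (IH r).2
      _ = N.card * z ^ n := by rw [Finset.sum_const, smul_eq_mul]
      _ ≤ z * z ^ n := by
          refine Nat.mul_le_mul_right _ ?_
          have := (hdeg q).2
          rwa [Set.ncard_eq_toFinset_card _ (hdeg q).1] at this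
      _ = z ^ (n + 1) := by ring


lemma dfs (G : SimpleGraph V) : ∀ (n : ℕ) (A : Set V) (p : V), A.Finite → A.ncard = n → p ∈ A →
    (∀ u ∈ A, (within G A).Reachable p u) →
    ∃ l : List V, List.Chain G.Adj p l ∧ l.length ≤ 2 * n - 2 ∧
      ∀ x, x ∈ A ↔ x = p ∨ x ∈ l := by
  intro n
  induction n using Nat.strong_induction_on with
  | _ n IHn =>
  intro A p hA hcard hp hreach
  match n, hcard with
  | 0, hcard =>
    exact absurd ((Set.ncard_eq_zero hA).mp hcard ▸ hp) (Set.notMem_empty p)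
  | 1, hcard =>
    obtain ⟨a, ha⟩ := (Set.ncard_eq_one).mp hcard
    refine ⟨[], List.Chain.nil, by norm_num, fun x => ?_⟩
    subst ha
    simp at hp ⊢
    subst hp; tauto
  | (m + 2), hcard =>
    set n := m + 2 with hn
    -- pick a vertex of maximal distance from p in `within G A`
    have hAne : A.Nonempty := ⟨p, hp⟩
    obtain ⟨v, hvmem, hvmax⟩ := hA.toFinset.exists_max_image
      (fun u => (within G A).dist p u) (by simpa using hAne)
    rw [Set.Finite.mem_toFinset] at hvmem
    have hvmax' : ∀ u ∈ A, (within G A).dist p u ≤ (within G A).dist p v := by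
      intro u hu; exact hvmax u (hA.mem_toFinset.mpr hu)
    -- there is a vertex ≠ p, so the max distance is positive, hence v ≠ p
    obtain ⟨a, b, ha, hb, hab⟩ := (Set.one_lt_ncard_iff hA).mp (by omega)
    have hnep : ∃ u ∈ A, u ≠ p := by
      by_cases h : a = p
      · exact ⟨b, hb, by rw [← h]; exact fun hh => hab hh.symm⟩
      · exact ⟨a, ha, h⟩
    obtain ⟨u₁, hu₁, hu₁p⟩ := hnep
    have hdpos : 0 < (within G A).dist p v := by
      have h1 : (within G A).dist p u₁ ≠ 0 := by
        intro h
        exact hu₁p (((hreach u₁ hu₁).dist_eq_zero_iff).mp h).symm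
      have := hvmax' u₁ hu₁
      omega
    have hvp : v ≠ p := by
      rintro rfl
      rw [SimpleGraph.dist_self] at hdpos
      exact Nat.lt_irrefl 0 hdpos
    -- a neighbor u₀ of v within A
    obtain ⟨W₀, hW₀len⟩ := (hreach v hvmem).exists_walk_length_eq_dist
    have hW₀nn : ¬ W₀.reverse.Nil := by
      intro h
      exact hvp (SimpleGraph.Walk.eq_of_length_eq_zero
        (SimpleGraph.Walk.nil_iff_length_eq.mp h))
    obtain ⟨u₀, hadj₀, _, _⟩ := SimpleGraph.Walk.not_nil_iff.mp hW₀nn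
    have hGadj₀ : G.Adj v u₀ := hadj₀.1
    have hu₀A : u₀ ∈ A := hadj₀.2.2
    have hu₀v : u₀ ≠ v := hGadj₀.ne'
    -- the smaller set
    set A' : Set V := A \ {v} with hA'
    have hpA' : p ∈ A' := ⟨hp, by simpa using (fun h => hvp h.symm)⟩
    have hA'fin : A'.Finite := hA.diff
    have hA'card : A'.ncard = m + 1 := by
      rw [hA', Set.ncard_diff_singleton_of_mem hvmem, hcard]; omega
    have hu₀A' : u₀ ∈ A' := ⟨hu₀A, by simpa using hu₀v⟩
    -- reachability within A'
    have hreach' : ∀ u ∈ A', (within G A').Reachable p u := by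
      intro u hu
      obtain ⟨W, hWlen⟩ := (hreach u hu.1).exists_walk_length_eq_dist
      have hvW : v ∉ W.support := by
        intro hvW
        have h1 : (W.takeUntil v hvW).length + (W.dropUntil v hvW).length = W.length := by
          rw [← SimpleGraph.Walk.length_append, W.take_spec hvW]
        have h2 : (within G A).dist p v ≤ (W.takeUntil v hvW).length :=
          SimpleGraph.dist_le _
        have h3 : (within G A).dist p u ≤ (within G A).dist p v := hvmax' u hu.1
        have h4 : (W.dropUntil v hvW).length = 0 := by omega
        exact hu.2 (by simpa using (SimpleGraph.Walk.eq_of_length_eq_zero h4).symm)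
      have hedges : ∀ e ∈ W.edges, e ∈ (within G A').edgeSet := by
        intro e he
        revert he
        refine Sym2.ind (fun x y he => ?_) e
        have hadj := W.edges_subset_edgeSet he
        have hx : x ∈ W.support := W.fst_mem_support_of_mem_edges he
        have hy : y ∈ W.support := W.snd_mem_support_of_mem_edges he
        rw [SimpleGraph.mem_edgeSet] at hadj ⊢
        exact ⟨hadj.1, ⟨hadj.2.1, by simp; rintro rfl; exact hvW hx⟩,
          ⟨hadj.2.2, by simp; rintro rfl; exact hvW hy⟩⟩
      exact ⟨W.transfer _ hedges⟩
    -- induction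
    obtain ⟨l', hl'chain, hl'len, hl'iff⟩ :=
      IHn (m + 1) (by omega) A' p hA'fin hA'card hpA' hreach'
    -- insert detour to v at u₀
    have hu₀l' : u₀ = p ∨ u₀ ∈ l' := (hl'iff u₀).mp hu₀A'
    obtain ⟨lnew, hchain, hlen, hmem⟩ :=
      chain_detour (fun a b h => h.symm) l' p hl'chain u₀ v hGadj₀.symm hu₀l'
    refine ⟨lnew, hchain, by omega, fun x => ?_⟩
    have h1 := hmem x
    have h2 := hl'iff x
    constructor
    · intro hx
      by_cases hxv : x = v
      · exact Or.imp_right (fun h => h) ((h1).mpr (Or.inr (Or.inr hxv))) |>.imp_left id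
      · exact h1.mpr (Or.imp_right Or.inl (h2.mp ⟨hx, by simpa using hxv⟩))
    · intro hx
      rcases h1.mp hx with h | h | h
      · exact h ▸ hp
      · exact (h2.mpr (Or.inr h)).1
      · exact h ▸ hvmem


lemma geom_mul (z : ℕ) (hz : 2 ≤ z) (m : ℕ) :
    ∀ n, (z - 1) * ∑ k ∈ Finset.Icc m n, z ^ k = z ^ (n + 1) - z ^ m := by
  intro n
  induction n with
  | zero =>
    rcases Nat.eq_zero_or_pos m with rfl | hm
    · simp [Nat.sub_mul]
    · rw [Finset.Icc_eq_empty (by omega), Finset.sum_empty, Nat.mul_zero]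
      have : z ^ (0 + 1) ≤ z ^ m := Nat.pow_le_pow_right (by omega) (by omega)
      omega
  | succ n ih =>
    by_cases hm : m ≤ n + 1
    · rw [Finset.sum_Icc_succ_top hm, Nat.mul_add]
      have h1 : z ^ m ≤ z ^ (n + 1) := Nat.pow_le_pow_right (by omega) hm
      have h2 : z ^ (n + 1) ≤ z ^ (n + 1 + 1) := Nat.pow_le_pow_right (by omega) (by omega)
      have h3 : (z - 1) * z ^ (n + 1) = z ^ (n + 1 + 1) - z ^ (n + 1) := by
        rw [Nat.sub_mul, one_mul]
        congr 1
        ring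
      omega
    · rw [Finset.Icc_eq_empty (by omega)]
      have : z ^ (n + 1 + 1) ≤ z ^ m := Nat.pow_le_pow_right (by omega) (by omega)
      simp
      omega

lemma sum_range_pow_le (z : ℕ) (hz : 2 ≤ z) : ∀ m, ∑ k ∈ Finset.range m, z ^ k ≤ z ^ m := by
  intro m
  induction m with
  | zero => simp
  | succ m ih =>
    rw [Finset.sum_range_succ, pow_succ]
    have : z ^ m * 2 ≤ z ^ m * z := Nat.mul_le_mul_left _ hz
    omega

/-- in a graph of maximum degree at most `z ≥ 2`, the number of connected
vertex sets of cardinality `b` containing a fixed vertex `p` is at most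
`Σ_{k=b−1}^{2zb} z^k = (z^{2zb+1} − z^{b−1})/(z−1)`: it grows at most exponentially. -/
theorem stmt_10 {V : Type*} (G : SimpleGraph V) (z : ℕ) (hz : 2 ≤ z)
    (hdeg : ∀ v : V, (G.neighborSet v).Finite ∧ (G.neighborSet v).ncard ≤ z)
    (p : V) (b : ℕ) (hb : 1 ≤ b) :
    {A : Set V | A.Finite ∧ A.ncard = b ∧ p ∈ A ∧ (G.induce A).Connected}.Finite ∧
    {A : Set V | A.Finite ∧ A.ncard = b ∧ p ∈ A ∧ (G.induce A).Connected}.ncard ≤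
      ∑ k ∈ Finset.Icc (b - 1) (2 * z * b), z ^ k ∧
    ∑ k ∈ Finset.Icc (b - 1) (2 * z * b), z ^ k =
      (z ^ (2 * z * b + 1) - z ^ (b - 1)) / (z - 1) := by
  classical
  set S := {A : Set V | A.Finite ∧ A.ncard = b ∧ p ∈ A ∧ (G.induce A).Connected} with hS
  set T := {l : List V | List.Chain G.Adj p l ∧ l.length ≤ 2 * b - 2} with hT
  have hTsub : T ⊆ ⋃ k ∈ Finset.range (2 * b - 1),
      {l : List V | List.Chain G.Adj p l ∧ l.length = k} := by
    rintro l ⟨hc, hlen⟩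
    simp only [Set.mem_iUnion]
    refine ⟨l.length, ?_, hc, rfl⟩
    simp only [Finset.mem_range]
    omega
  have hUfin : (⋃ k ∈ Finset.range (2 * b - 1),
      {l : List V | List.Chain G.Adj p l ∧ l.length = k}).Finite :=
    Set.Finite.biUnion (Finset.range _).finite_toSet (fun k _ => (chain_count G z hdeg k p).1)
  have hTfin : T.Finite := hUfin.subset hTsub
  have hTcard : T.ncard ≤ ∑ k ∈ Finset.range (2 * b - 1), z ^ k := by
    calc T.ncard
        ≤ (⋃ k ∈ Finset.range (2 * b - 1),
            {l : List V | List.Chain G.Adj p l ∧ l.length = k}).ncard :=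
          Set.ncard_le_ncard hTsub hUfin
      _ ≤ ∑ k ∈ Finset.range (2 * b - 1),
            {l : List V | List.Chain G.Adj p l ∧ l.length = k}.ncard := ncard_biUnion_le _ _
      _ ≤ ∑ k ∈ Finset.range (2 * b - 1), z ^ k :=
          Finset.sum_le_sum fun k _ => (chain_count G z hdeg k p).2
  have hmap : ∀ A ∈ S, ∃ l ∈ T, ∀ x, x ∈ A ↔ x = p ∨ x ∈ l := by
    intro A hA
    obtain ⟨hAfin, hAcard, hpA, hconn⟩ := hA
    have hreach : ∀ u ∈ A, (within G A).Reachable p u := by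
      intro u hu
      obtain ⟨w⟩ := hconn.preconnected ⟨p, hpA⟩ ⟨u, hu⟩
      have key : ∀ (x y : A) (_w : (G.induce A).Walk x y), (within G A).Reachable x.val y.val := by
        intro x y w
        induction w with
        | nil => exact SimpleGraph.Reachable.refl _
        | @cons a c d hadj _w ih =>
          exact ((show (within G A).Adj a.val c.val from ⟨hadj, a.2, c.2⟩).reachable).trans ih
      exact key _ _ w
    obtain ⟨l, hc, hlen, hiff⟩ := dfs G b A p hAfin hAcard hpA hreach
    exact ⟨l, ⟨hc, hlen⟩, hiff⟩
  choose! f hfT hfiff using hmap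
  have hinj : Set.InjOn f S := by
    intro A₁ h₁ A₂ h₂ hfe
    ext x
    rw [hfiff A₁ h₁ x, hfiff A₂ h₂ x, hfe]
  have himg : f '' S ⊆ T := by rintro _ ⟨A, hA, rfl⟩; exact hfT A hA
  have hSfin : S.Finite := Set.Finite.of_finite_image (hTfin.subset himg) hinj
  have hb2 : 2 * b - 1 ≤ 2 * z * b := by
    have : 2 * 2 * b ≤ 2 * z * b := Nat.mul_le_mul_right b (Nat.mul_le_mul_left 2 hz)
    omega
  have hcard : S.ncard ≤ ∑ k ∈ Finset.Icc (b - 1) (2 * z * b), z ^ k := by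
    calc S.ncard = (f '' S).ncard := (Set.ncard_image_of_injOn hinj).symm
      _ ≤ T.ncard := Set.ncard_le_ncard himg hTfin
      _ ≤ ∑ k ∈ Finset.range (2 * b - 1), z ^ k := hTcard
      _ ≤ z ^ (2 * b - 1) := sum_range_pow_le z hz _
      _ ≤ z ^ (2 * z * b) := Nat.pow_le_pow_right (by omega) hb2
      _ ≤ ∑ k ∈ Finset.Icc (b - 1) (2 * z * b), z ^ k := by
          refine Finset.single_le_sum (fun k _ => Nat.zero_le _) ?_
          rw [Finset.mem_Icc]
          exact ⟨by omega, le_refl _⟩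
  refine ⟨hSfin, hcard, ?_⟩
  have h := geom_mul z hz (b - 1) (2 * z * b)
  rw [← h, Nat.mul_div_cancel_left _ (by omega : 0 < z - 1)]

end PG
end
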